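/- Let E be a complete real inner product space and let f : E → ℝ be 1-Lipschitz and differentiable at x ∈ E. Suppose there exists y ∈ E with y ≠ x such that f(x) ≥ 0, f(y) ≤ 0, and f(x) - f(y) = ‖x - y‖. Then the point x_δ = x - f(x) • ∇f(x) satisfies f(x_δ) = 0, ‖x - x_δ‖ = f(x), and for every z ∈ E with f(z) ≤ 0 one has ‖x - z‖ ≥ ‖x - x_δ‖. Hence x_δ realizes the minimum of ‖x - z‖ over all z with f(z) ≤ 0, i.e. x_δ is an optimal adversarial example for x. -/

import Mathlib

/-- Corollary 1 (optimal adversarial example): the point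
`x_δ = x - f x • ∇f(x)` lies on the decision boundary, is at distance `f x`
from `x`, and minimizes the distance from `x` among all points classified
negatively. -/
theorem otnn_optimal_adversarial {E : Type*} [NormedAddCommGroup E]
    [InnerProductSpace ℝ E] [CompleteSpace E]
    (f : E → ℝ) (hf : LipschitzWith 1 f) (x : E) (hdiff : DifferentiableAt ℝ f x)
    (h : ∃ y : E, y ≠ x ∧ 0 ≤ f x ∧ f y ≤ 0 ∧ f x - f y = ‖x - y‖) :
    f (x - f x • gradient f x) = 0 ∧
    ‖x - (x - f x • gradient f x)‖ = f x ∧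
    ∀ z : E, f z ≤ 0 → ‖x - z‖ ≥ ‖x - (x - f x • gradient f x)‖ := by
  obtain ⟨y, hyx, hfx0, hfy0, hxy⟩ := h
  -- Lipschitz bound in convenient form
  have lip : ∀ a b : E, f a - f b ≤ ‖a - b‖ := by
    intro a b
    have := hf.dist_le_mul a b
    rw [NNReal.coe_one, one_mul] at this
    have := le_trans (le_abs_self (f a - f b)) this
    simpa [Real.dist_eq, dist_eq_norm] using this
  set d : ℝ := ‖x - y‖ with hd
  have hd0 : 0 < d := by
    rw [hd, norm_pos_iff, sub_ne_zero]
    exact fun h => hyx h.symm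
  set u : E := d⁻¹ • (y - x) with hu
  have hunorm : ‖u‖ = 1 := by
    rw [hu, norm_smul, norm_inv, Real.norm_eq_abs, abs_of_pos hd0]
    have : ‖y - x‖ = d := by rw [hd, norm_sub_rev]
    rw [this]; field_simp
  have hdu : d • u = y - x := by
    rw [hu, smul_smul, mul_inv_cancel₀ hd0.ne', one_smul]
  -- points on the segment
  have seg : ∀ t : ℝ, 0 ≤ t → t ≤ d → f (x + t • u) = f x - t := by
    intro t ht0 htd
    have e1 : ‖x - (x + t • u)‖ = t := by
      have : x - (x + t • u) = (-t) • u := by module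
      rw [this, norm_smul, hunorm, Real.norm_eq_abs, abs_neg, abs_of_nonneg ht0, mul_one]
    have e2 : ‖x + t • u - y‖ = d - t := by
      have : x + t • u - y = (t - d) • u := by
        rw [sub_smul, hdu]; module
      rw [this, norm_smul, hunorm, Real.norm_eq_abs, abs_of_nonpos (by linarith), mul_one]
      ring
    have l1 := lip x (x + t • u)
    have l2 := lip (x + t • u) y
    rw [e1] at l1; rw [e2] at l2
    linarith
  -- gradient facts
  set g : E := gradient f x with hg
  have hgrad : HasGradientAt f g x := hdiff.hasGradientAt
  have hfd : HasFDerivAt f (InnerProductSpace.toDual ℝ E g) x := hgrad.hasFDerivAt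
  -- the directional derivative along u is -1
  have hinner : (inner ℝ g u : ℝ) = -1 := by
    have hcurve : HasDerivAt (fun t : ℝ => x + t • u) u 0 := by
      simpa using ((hasDerivAt_id (0:ℝ)).smul_const u).const_add x
    have hcomp : HasDerivAt (fun t : ℝ => f (x + t • u))
        ((InnerProductSpace.toDual ℝ E g) u) 0 := by
      have h0 : HasFDerivAt f (InnerProductSpace.toDual ℝ E g) (x + (0:ℝ) • u) := by
        simpa using hfd
      exact h0.comp_hasDerivAt 0 hcurve
    have htend2 : Filter.Tendsto (fun t : ℝ => (f (x + t • u) - f x) / t)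
        (nhdsWithin 0 (Set.Ioi 0)) (nhds ((InnerProductSpace.toDual ℝ E g) u)) := by
      have := hasDerivAt_iff_tendsto_slope.mp hcomp
      have hmono : nhdsWithin (0:ℝ) (Set.Ioi 0) ≤ nhdsWithin 0 ({0}ᶜ) := by
        apply nhdsWithin_mono
        intro t ht
        exact ne_of_gt ht
      have := this.mono_left hmono
      refine this.congr' ?_
      filter_upwards [self_mem_nhdsWithin] with t ht
      simp [slope_def_field, div_eq_inv_mul]
    have hconst : Filter.Tendsto (fun t : ℝ => (f (x + t • u) - f x) / t)
        (nhdsWithin 0 (Set.Ioi 0)) (nhds (-1)) := by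
      have hev : ∀ᶠ t in nhdsWithin (0:ℝ) (Set.Ioi 0),
          (f (x + t • u) - f x) / t = -1 := by
        filter_upwards [Ioo_mem_nhdsGT_of_mem (Set.left_mem_Ico.mpr hd0)] with t ht
        rw [seg t ht.1.le ht.2.le, show f x - t - f x = -t by ring, neg_div,
          div_self ht.1.ne']
      exact Filter.Tendsto.congr' (Filter.EventuallyEq.symm hev) tendsto_const_nhds
    have := tendsto_nhds_unique htend2 hconst
    simpa [InnerProductSpace.toDual_apply_apply] using this
  -- norm of gradient is at most 1
  have hgnorm : ‖g‖ ≤ 1 := by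
    have h1 := hfd.le_of_lipschitz hf
    have h2 : ‖InnerProductSpace.toDual ℝ E g‖ = ‖g‖ :=
      (InnerProductSpace.toDual ℝ E).norm_map g
    rw [h2] at h1
    exact_mod_cast h1
  -- g = -u
  have hgu : g = -u := by
    have hsq : ‖g + u‖ ^ 2 = ‖g‖ ^ 2 + 2 * inner ℝ g u + ‖u‖ ^ 2 := by
      rw [norm_add_sq_real]; try ring
    have : ‖g + u‖ ^ 2 ≤ 0 := by
      rw [hsq, hinner, hunorm]
      nlinarith [norm_nonneg g]
    have h0 : g + u = 0 := by
      have := sq_nonneg ‖g + u‖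
      have hnn : ‖g + u‖ = 0 := by nlinarith
      exact norm_eq_zero.mp hnn
    linear_combination (norm := module) h0
  have hxdelta : x - f x • g = x + f x • u := by
    rw [hgu]; module
  have hfxd : f x ≤ d := by linarith
  refine ⟨?_, ?_, ?_⟩
  · rw [hxdelta, seg (f x) hfx0 hfxd]; ring
  · have : x - (x - f x • g) = f x • g := by module
    rw [this, norm_smul, Real.norm_eq_abs, abs_of_nonneg hfx0, hgu, norm_neg, hunorm, mul_one]
  · intro z hz
    have : x - (x - f x • g) = f x • g := by module
    rw [this, norm_smul, Real.norm_eq_abs, abs_of_nonneg hfx0, hgu, norm_neg, hunorm, mul_one]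
    have := lip x z
    linarith
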